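/- arXiv:2404.06088 — 2 statements merged into one kernel-verified Lean document; each statement's English description precedes it below -/
import Mathlib

section
/- Let B be a block configuration in 𝔽₂^d and let φ : 𝔽₂^d → 𝔽₂^{d̄} and ψ : 𝔽₂^{d̄} → 𝔽₂^{d′} be linear maps, with Φ the φ-induced map on TP[B]. Then (i) RP[B][ψ∘φ] = { x ∈ TP[B] : Φ(x) ∈ RP[φ(B)][ψ] }; (ii) RP[B][φ] ⊆ RP[B][ψ∘φ]; and (iii) if ψ is injective on the 𝔽₂-linear span of φ(B(1)) ∪ … ∪ φ(B(n)), then RP[B][φ] = RP[B][ψ∘φ]. -/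
open scoped Classical

/-- The field `𝔽₂^d`, represented as functions `Fin d → ZMod 2`. -/
abbrev F2 (d : ℕ) : Type := Fin d → ZMod 2

/-- A cyclic transversal of a block configuration `B`. -/
def IsCyclicTransversal {d n : ℕ} (B : Fin n → Set (F2 d)) (ξ : Fin n → F2 d) : Prop :=
  (∀ i, ξ i ∈ B i) ∧ (∑ i, ξ i) = 0

/-- The incidence vector of a transversal. -/
noncomputable def incVec {d n : ℕ} (ξ : Fin n → F2 d) : Fin n → F2 d → ℝ :=
  fun i ω => if ξ i = ω then 1 else 0

/-- The cyclic transversal polytope of a block configuration. -/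
noncomputable def CTP {d n : ℕ} (B : Fin n → Set (F2 d)) : Set (Fin n → F2 d → ℝ) :=
  convexHull ℝ (incVec '' { ξ | IsCyclicTransversal B ξ })

/-- The transversal polytope of a block configuration. -/
def TP {d n : ℕ} (B : Fin n → Set (F2 d)) : Set (Fin n → F2 d → ℝ) :=
  { x | (∀ i ω, 0 ≤ x i ω) ∧ (∀ i ω, ω ∉ B i → x i ω = 0) ∧ ∀ i, (∑ ω : F2 d, x i ω) = 1 }

/-- The size of a block configuration. -/
noncomputable def blockSize {d n : ℕ} (B : Fin n → Set (F2 d)) : ℕ := ∑ i, (B i).ncard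

/-- The rank of a block configuration. -/
noncomputable def blockRank {d n : ℕ} (B : Fin n → Set (F2 d)) : ℕ :=
  Module.finrank (ZMod 2) (Submodule.span (ZMod 2) (⋃ i, B i))

/-- Two sets of real vectors are affinely isomorphic. -/
def AffIso {α β : Type*} [AddCommGroup α] [Module ℝ α] [AddCommGroup β] [Module ℝ β]
    (P : Set α) (Q : Set β) : Prop :=
  ∃ f : α →ᵃ[ℝ] β, Set.InjOn f P ∧ f '' P = Q

/-- The left-hand side of the lifted odd-set (LOS) inequality associated with `η` and `I`. -/
noncomputable def losLHS {d n : ℕ} (B : Fin n → Set (F2 d)) (η : F2 d) (I : Finset (Fin n))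
    (x : Fin n → F2 d → ℝ) : ℝ :=
  (∑ i ∈ I, ∑ ω ∈ Finset.univ.filter (fun ω : F2 d => ω ∈ B i ∧ (∑ j, η j * ω j) = 0), x i ω) +
  (∑ i ∈ Iᶜ, ∑ ω ∈ Finset.univ.filter (fun ω : F2 d => ω ∈ B i ∧ (∑ j, η j * ω j) = 1), x i ω)

/-- The `φ`-induced map `Φ` (w.r.t. the block configuration `B`):
`Φ(x)^i_{ω'} = Σ_{ω ∈ B(i), φ(ω) = ω'} x^i_ω`. -/
noncomputable def indMap {d d' n : ℕ} (B : Fin n → Set (F2 d)) (φ : F2 d →ₗ[ZMod 2] F2 d')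
    (x : Fin n → F2 d → ℝ) : Fin n → F2 d' → ℝ :=
  fun i ω' => ∑ ω ∈ Finset.univ.filter (fun ω : F2 d => ω ∈ B i ∧ φ ω = ω'), x i ω

/-- The `φ`-relaxation `RP[B][φ]` of `CTP[B]`. -/
noncomputable def RP {d d' n : ℕ} (B : Fin n → Set (F2 d)) (φ : F2 d →ₗ[ZMod 2] F2 d') :
    Set (Fin n → F2 d → ℝ) :=
  { x ∈ TP B | indMap B φ x ∈ CTP (fun i => φ '' B i) }

/-- The rank-`r` relaxation `RP[B][r]` of `CTP[B]`: the intersection of the `φ`-relaxations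
over all linear maps `φ` with domain `𝔽₂^d` whose image has dimension at most `r`. -/
noncomputable def RPr {d n : ℕ} (B : Fin n → Set (F2 d)) (r : ℕ) :
    Set (Fin n → F2 d → ℝ) :=
  ⋂ (d' : ℕ), ⋂ (φ : F2 d →ₗ[ZMod 2] F2 d'),
    ⋂ (_ : Module.finrank (ZMod 2) (LinearMap.range φ) ≤ r), RP B φ

-- aux lemmas

noncomputable def indLin {d d' n : ℕ} (B : Fin n → Set (F2 d)) (φ : F2 d →ₗ[ZMod 2] F2 d') :
    (Fin n → F2 d → ℝ) →ₗ[ℝ] (Fin n → F2 d' → ℝ) where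
  toFun := indMap B φ
  map_add' x y := by funext i ω'; simp [indMap, Finset.sum_add_distrib]
  map_smul' c x := by funext i ω'; simp [indMap, Finset.mul_sum]

lemma tp_convex {d n : ℕ} (B : Fin n → Set (F2 d)) : Convex ℝ (TP B) := by
  rintro x ⟨hx0, hxs, hx1⟩ y ⟨hy0, hys, hy1⟩ a b ha hb hab
  refine ⟨fun i ω => ?_, fun i ω h => by simp [hxs i ω h, hys i ω h], fun i => ?_⟩
  · simp only [Pi.add_apply, Pi.smul_apply, smul_eq_mul]
    exact add_nonneg (mul_nonneg ha (hx0 i ω)) (mul_nonneg hb (hy0 i ω))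
  simp only [Pi.add_apply, Pi.smul_apply, smul_eq_mul, Finset.sum_add_distrib, ← Finset.mul_sum,
    hx1 i, hy1 i, mul_one, hab]

lemma incVec_mem_TP {d n : ℕ} {B : Fin n → Set (F2 d)} {ξ : Fin n → F2 d}
    (hξ : ∀ i, ξ i ∈ B i) : incVec ξ ∈ TP B := by
  refine ⟨fun i ω => ?_, fun i ω h => ?_, fun i => ?_⟩
  · unfold incVec; split <;> norm_num
  · unfold incVec
    split
    · next he => exact absurd (he ▸ hξ i) h
    · rfl
  · simp [incVec, Finset.sum_ite_eq]

lemma ctp_subset_tp {d n : ℕ} (B : Fin n → Set (F2 d)) : CTP B ⊆ TP B := by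
  apply convexHull_min _ (tp_convex B)
  rintro _ ⟨ξ, hξ, rfl⟩
  exact incVec_mem_TP hξ.1

lemma indMap_incVec {d d' n : ℕ} {C : Fin n → Set (F2 d)} (ψ : F2 d →ₗ[ZMod 2] F2 d')
    {ξ : Fin n → F2 d} (hξ : ∀ i, ξ i ∈ C i) :
    indMap C ψ (incVec ξ) = incVec (fun i => ψ (ξ i)) := by
  funext i ω'
  simp only [indMap, incVec]
  rw [Finset.sum_ite_eq]
  simp [Finset.mem_filter, hξ i]

lemma indMap_mem_TP {d d' n : ℕ} {B : Fin n → Set (F2 d)} (φ : F2 d →ₗ[ZMod 2] F2 d')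
    {x : Fin n → F2 d → ℝ} (hx : x ∈ TP B) :
    indMap B φ x ∈ TP (fun i => φ '' B i) := by
  obtain ⟨hx0, hxs, hx1⟩ := hx
  refine ⟨fun i ω' => Finset.sum_nonneg fun ω _ => hx0 i ω, fun i ω' h => ?_, fun i => ?_⟩
  · apply Finset.sum_eq_zero
    intro ω hω
    rw [Finset.mem_filter] at hω
    exact absurd ⟨ω, hω.2.1, hω.2.2⟩ h
  · simp only [indMap]
    have := Finset.sum_fiberwise_eq_sum_filter (Finset.univ.filter (fun ω : F2 d => ω ∈ B i))
      (Finset.univ : Finset (F2 d')) (fun ω => φ ω) (fun ω => x i ω)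
    simp only [Finset.filter_filter, Finset.mem_univ, Finset.filter_true] at this
    rw [this]
    rw [← hx1 i]
    apply Finset.sum_subset (Finset.filter_subset _ _)
    intro ω _ hω
    simp only [Finset.mem_filter, Finset.mem_univ, true_and, and_true] at hω
    exact hxs i ω hω

lemma indMap_comp {d d₁ d₂ n : ℕ} (B : Fin n → Set (F2 d)) (φ : F2 d →ₗ[ZMod 2] F2 d₁)
    (ψ : F2 d₁ →ₗ[ZMod 2] F2 d₂) (x : Fin n → F2 d → ℝ) :
    indMap (fun i => φ '' B i) ψ (indMap B φ x) = indMap B (ψ.comp φ) x := by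
  funext i ω''
  simp only [indMap]
  have h1 : ∑ ω' ∈ Finset.univ.filter (fun ω' : F2 d₁ => ω' ∈ φ '' B i ∧ ψ ω' = ω''),
        ∑ ω ∈ Finset.univ.filter (fun ω : F2 d => ω ∈ B i ∧ φ ω = ω'), x i ω
      = ∑ ω' ∈ Finset.univ.filter (fun ω' : F2 d₁ => ψ ω' = ω''),
        ∑ ω ∈ Finset.univ.filter (fun ω : F2 d => ω ∈ B i ∧ φ ω = ω'), x i ω := by
    apply Finset.sum_subset (fun ω' hω' => by
      simp only [Finset.mem_filter] at hω' ⊢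
      exact ⟨hω'.1, hω'.2.2⟩)
    intro ω' hmemb hω'
    simp only [Finset.mem_filter, Finset.mem_univ, true_and] at hmemb hω'
    apply Finset.sum_eq_zero
    intro ω hω
    simp only [Finset.mem_filter, Finset.mem_univ, true_and] at hω
    exact absurd (⟨⟨ω, hω.1, hω.2⟩, hmemb⟩ : ω' ∈ ⇑φ '' B i ∧ ψ ω' = ω'') hω'
  rw [h1]
  have h2 := Finset.sum_fiberwise_eq_sum_filter (Finset.univ.filter (fun ω : F2 d => ω ∈ B i))
      (Finset.univ.filter (fun ω' : F2 d₁ => ψ ω' = ω'')) (fun ω => φ ω) (fun ω => x i ω)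
  simp only [Finset.filter_filter, Finset.mem_filter, Finset.mem_univ, true_and] at h2
  rw [h2]
  rfl

lemma indMap_mem_CTP {d d' n : ℕ} {C : Fin n → Set (F2 d)} (ψ : F2 d →ₗ[ZMod 2] F2 d')
    {y : Fin n → F2 d → ℝ} (hy : y ∈ CTP C) :
    indMap C ψ y ∈ CTP (fun i => ψ '' C i) := by
  have himg : indMap C ψ '' (incVec '' { ξ | IsCyclicTransversal C ξ })
      ⊆ incVec '' { ζ | IsCyclicTransversal (fun i => ψ '' C i) ζ } := by
    rintro _ ⟨_, ⟨ξ, hξ, rfl⟩, rfl⟩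
    refine ⟨fun i => ψ (ξ i), ⟨fun i => ⟨ξ i, hξ.1 i, rfl⟩, ?_⟩, (indMap_incVec ψ hξ.1).symm⟩
    rw [← map_sum, hξ.2, map_zero]
  have h0 : indMap C ψ y ∈ ⇑(indLin C ψ) '' (convexHull ℝ (incVec '' { ξ | IsCyclicTransversal C ξ })) :=
    ⟨y, hy, rfl⟩
  rw [LinearMap.image_convexHull] at h0
  exact convexHull_mono himg h0

lemma span_mem_of_block {d n : ℕ} {C : Fin n → Set (F2 d)} {i : Fin n} {ω : F2 d}
    (h : ω ∈ C i) : ω ∈ (Submodule.span (ZMod 2) (⋃ i, C i) : Set (F2 d)) :=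
  Submodule.subset_span (Set.mem_iUnion.2 ⟨i, h⟩)

lemma core {d₁ d₂ n : ℕ} (C : Fin n → Set (F2 d₁)) (ψ : F2 d₁ →ₗ[ZMod 2] F2 d₂)
    (hInj : Set.InjOn ψ (Submodule.span (ZMod 2) (⋃ i, C i) : Set (F2 d₁)))
    {y : Fin n → F2 d₁ → ℝ} (hy : y ∈ TP C)
    (hmem : indMap C ψ y ∈ CTP (fun i => ψ '' C i)) : y ∈ CTP C := by
  -- every cyclic transversal of ψC lifts
  have hsub : incVec '' { ζ | IsCyclicTransversal (fun i => ψ '' C i) ζ }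
      ⊆ indMap C ψ '' (incVec '' { ξ | IsCyclicTransversal C ξ }) := by
    rintro _ ⟨ζ, hζ, rfl⟩
    choose ξ hξC hξψ using fun i => hζ.1 i
    have hcyc : IsCyclicTransversal C ξ := by
      refine ⟨hξC, hInj ?_ (Submodule.zero_mem _) ?_⟩
      · exact Submodule.sum_mem _ fun i _ => Submodule.subset_span (Set.mem_iUnion.2 ⟨i, hξC i⟩)
      · rw [map_sum, map_zero]
        simp only [hξψ]
        exact hζ.2
    refine ⟨incVec ξ, ⟨ξ, hcyc, rfl⟩, ?_⟩
    rw [indMap_incVec ψ hξC]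
    have : (fun i => ψ (ξ i)) = ζ := funext hξψ
    rw [this]
  have h2 : indMap C ψ y ∈ indMap C ψ '' CTP C := by
    have := convexHull_mono hsub hmem
    rwa [show indMap C ψ = ⇑(indLin C ψ) from rfl, ← LinearMap.image_convexHull] at this
  obtain ⟨z, hz, hzy⟩ := h2
  have hzTP : z ∈ TP C := ctp_subset_tp C hz
  -- recover : indMap injective on TP
  have hrec : ∀ u : Fin n → F2 d₁ → ℝ, u ∈ TP C → ∀ i ω', ω' ∈ C i →
      u i ω' = indMap C ψ u i (ψ ω') := by
    intro u hu i ω' hω'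
    have hfil : Finset.univ.filter (fun ω : F2 d₁ => ω ∈ C i ∧ ψ ω = ψ ω') = {ω'} := by
      ext τ
      simp only [Finset.mem_filter, Finset.mem_univ, true_and, Finset.mem_singleton]
      constructor
      · rintro ⟨hτ, hψ⟩
        exact hInj (span_mem_of_block hτ) (span_mem_of_block hω') hψ
      · rintro rfl; exact ⟨hω', rfl⟩
    simp [indMap, hfil]
  have : y = z := by
    funext i ω'
    by_cases hω' : ω' ∈ C i
    · rw [hrec y hy i ω' hω', hrec z hzTP i ω' hω', hzy]
    · rw [hy.2.1 i ω' hω', hzTP.2.1 i ω' hω']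
  rw [this]; exact hz


/-- behaviour of `φ`-relaxations under composition of linear maps. -/
theorem statement16 (d d₁ d₂ n : ℕ) (hn : 2 ≤ n) (B : Fin n → Set (F2 d))
    (hB : ∀ i, (B i).Nonempty)
    (φ : F2 d →ₗ[ZMod 2] F2 d₁) (ψ : F2 d₁ →ₗ[ZMod 2] F2 d₂) :
    RP B (ψ.comp φ) = { x ∈ TP B | indMap B φ x ∈ RP (fun i => φ '' B i) ψ } ∧
    RP B φ ⊆ RP B (ψ.comp φ) ∧
    (Set.InjOn ψ (Submodule.span (ZMod 2) (⋃ i, φ '' B i) : Set (F2 d₁)) →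
      RP B φ = RP B (ψ.comp φ)) := by
  have hcfg : (fun i => (ψ.comp φ) '' B i) = (fun i => ψ '' (φ '' B i)) := by
    funext i
    rw [LinearMap.coe_comp, Set.image_comp]
  have part2 : RP B φ ⊆ RP B (ψ.comp φ) := by
    rintro x ⟨hTP, hCTP⟩
    refine ⟨hTP, ?_⟩
    rw [← indMap_comp B φ ψ x, hcfg]
    exact indMap_mem_CTP ψ hCTP
  refine ⟨?_, part2, ?_⟩
  · ext x
    constructor
    · rintro ⟨hTP, hCTP⟩
      refine ⟨hTP, indMap_mem_TP φ hTP, ?_⟩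
      rw [indMap_comp B φ ψ x, ← hcfg]
      exact hCTP
    · rintro ⟨hTP, _, hCTP⟩
      refine ⟨hTP, ?_⟩
      rw [← indMap_comp B φ ψ x, hcfg]
      exact hCTP
  · intro hInj
    refine Set.Subset.antisymm part2 ?_
    rintro x ⟨hTP, hCTP⟩
    refine ⟨hTP, ?_⟩
    refine core (fun i => φ '' B i) ψ hInj (indMap_mem_TP φ hTP) ?_
    rw [indMap_comp B φ ψ x, ← hcfg]
    exact hCTP
end

section
/- For every block configuration B in 𝔽₂^d, the rank-1 relaxation of CTP[B] is exactly the subset of the transversal polytope cut out by the lifted odd-set inequalities: RP[B][1] = { x ∈ TP[B] : x satisfies the LOS inequality associated with η and I for every nonzero η ∈ 𝔽₂^d and every I ⊆ [n] of odd cardinality }. -/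
set_option maxHeartbeats 1000000


open scoped Classical

section AuxLOS
open Finset

noncomputable def losb {n : ℕ} (b : Fin n → ℝ) (I : Finset (Fin n)) : ℝ :=
  (∑ i ∈ I, (1 - b i)) + ∑ i ∈ Iᶜ, b i

def parityP {n : ℕ} (A0 A1 : Fin n → Prop) : Set (Fin n → ℝ) :=
  {b | (∀ i, 0 ≤ b i) ∧ (∀ i, b i ≤ 1) ∧ (∀ i, ¬ A1 i → b i = 0) ∧ (∀ i, ¬ A0 i → b i = 1) ∧
    ∀ I : Finset (Fin n), Odd I.card → 1 ≤ losb b I}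

def parityV {n : ℕ} (A0 A1 : Fin n → Prop) : Set (Fin n → ℝ) :=
  {c | ∃ S : Finset (Fin n), Even S.card ∧ (∀ i ∈ S, A1 i) ∧ (∀ i ∉ S, A0 i) ∧
    c = fun i => if i ∈ S then (1:ℝ) else 0}

lemma losb_eq_sum_univ {n : ℕ} (b : Fin n → ℝ) (I : Finset (Fin n)) :
    losb b I = ∑ i, (if i ∈ I then 1 - b i else b i) := by
  rw [losb, Finset.sum_ite]
  congr 1
  · congr 1; ext i; simp
  · congr 1; ext i; simp

lemma losb_add {n : ℕ} (b p : Fin n → ℝ) (I : Finset (Fin n)) :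
    losb (fun i => b i + p i) I = losb b I + ((∑ i ∈ Iᶜ, p i) - ∑ i ∈ I, p i) := by
  simp only [losb, Finset.sum_add_distrib]
  rw [show (∑ i ∈ I, (1 - (b i + p i))) = (∑ i ∈ I, ((1 - b i) - p i)) by apply Finset.sum_congr rfl; intros; ring]
  rw [Finset.sum_sub_distrib]
  ring

lemma sum_two_point {n : ℕ} {j k : Fin n} (hjk : j ≠ k) (σ τ : ℝ) (s : Finset (Fin n)) :
    (∑ i ∈ s, ((if i = j then σ else 0) + (if i = k then τ else 0)))
      = (if j ∈ s then σ else 0) + (if k ∈ s then τ else 0) := by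
  rw [Finset.sum_add_distrib, Finset.sum_ite_eq' s j (fun _ => σ),
    Finset.sum_ite_eq' s k (fun _ => τ)]

lemma parity_caseC {n : ℕ} (e : Fin n → ℝ) (h0 : ∀ i, 0 ≤ e i) (h1 : ∀ i, e i ≤ 1)
    {j k : Fin n} (hjk : j ≠ k)
    (hj0 : e j ≠ 0) (hj1 : e j ≠ 1) (hk0 : e k ≠ 0) (hk1 : e k ≠ 1)
    {I₁ I₂ : Finset (Fin n)} (hI₁o : Odd I₁.card) (hI₂o : Odd I₂.card)
    (ht₁ : losb e I₁ = 1) (ht₂ : losb e I₂ = 1)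
    (hsep : ¬(j ∈ I₁ ↔ k ∈ I₁)) (hsame : j ∈ I₂ ↔ k ∈ I₂) : False := by
  set g : Fin n → ℝ := fun i =>
    (if i ∈ I₁ then 1 - e i else e i) + (if i ∈ I₂ then 1 - e i else e i) with hg_def
  have hgsum : ∑ i, g i = 2 := by
    rw [hg_def, Finset.sum_add_distrib, ← losb_eq_sum_univ, ← losb_eq_sum_univ, ht₁, ht₂]
    norm_num
  have hgnn : ∀ i, 0 ≤ g i := by
    intro i
    have := h0 i; have := h1 i
    simp only [hg_def]
    split_ifs <;> linarith
  -- the disagreement set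
  set D : Finset (Fin n) := (I₁ \ I₂) ∪ (I₂ \ I₁) with hD_def
  have hmemD : ∀ i, i ∈ D ↔ ¬(i ∈ I₁ ↔ i ∈ I₂) := by
    intro i; simp only [hD_def, Finset.mem_union, Finset.mem_sdiff]; tauto
  have hgD : ∀ i ∈ D, g i = 1 := by
    intro i hi
    rw [hmemD] at hi
    simp only [hg_def]
    split_ifs with hh1 hh2 hh2 <;> first | (exfalso; tauto) | ring
  -- find m (agreeing, fractional) and m' (disagreeing)
  obtain ⟨m, m', hmfrac0, hmfrac1, hmm', hmD, hm'D⟩ :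
      ∃ m m' : Fin n, e m ≠ 0 ∧ e m ≠ 1 ∧ m ≠ m' ∧ m ∉ D ∧ m' ∈ D := by
    by_cases hj2 : j ∈ I₂
    · have hk2 : k ∈ I₂ := hsame.mp hj2
      by_cases hj1' : j ∈ I₁
      · have hk1' : k ∉ I₁ := by tauto
        exact ⟨j, k, hj0, hj1, hjk, by rw [hmemD]; tauto, by rw [hmemD]; tauto⟩
      · have hk1' : k ∈ I₁ := by tauto
        exact ⟨k, j, hk0, hk1, hjk.symm, by rw [hmemD]; tauto, by rw [hmemD]; tauto⟩
    · have hk2 : k ∉ I₂ := fun h => hj2 (hsame.mpr h)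
      by_cases hj1' : j ∈ I₁
      · have hk1' : k ∉ I₁ := by tauto
        exact ⟨k, j, hk0, hk1, hjk.symm, by rw [hmemD]; tauto, by rw [hmemD]; tauto⟩
      · have hk1' : k ∈ I₁ := by tauto
        exact ⟨j, k, hj0, hj1, hjk, by rw [hmemD]; tauto, by rw [hmemD]; tauto⟩
  have hgm : 0 < g m := by
    have h01 : 0 < e m := lt_of_le_of_ne (h0 m) (Ne.symm hmfrac0)
    have h11 : e m < 1 := lt_of_le_of_ne (h1 m) hmfrac1
    have hagree : (m ∈ I₁ ↔ m ∈ I₂) := by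
      by_contra hc; exact hmD ((hmemD m).mpr hc)
    simp only [hg_def]
    by_cases hm1 : m ∈ I₁
    · rw [if_pos hm1, if_pos (hagree.mp hm1)]; linarith
    · rw [if_neg hm1, if_neg (fun h => hm1 (hagree.mpr h))]; linarith
  -- |D| is even
  have hDeven : D.card % 2 = 0 := by
    have hdisj : Disjoint (I₁ \ I₂) (I₂ \ I₁) := disjoint_sdiff_sdiff
    have hcard : D.card = (I₁ \ I₂).card + (I₂ \ I₁).card := Finset.card_union_of_disjoint hdisj
    have e1 : (I₁ \ I₂).card + (I₁ ∩ I₂).card = I₁.card := Finset.card_sdiff_add_card_inter I₁ I₂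
    have e2 : (I₂ \ I₁).card + (I₂ ∩ I₁).card = I₂.card := Finset.card_sdiff_add_card_inter I₂ I₁
    have e3 : (I₁ ∩ I₂).card = (I₂ ∩ I₁).card := by rw [Finset.inter_comm]
    obtain ⟨p, hp⟩ := hI₁o; obtain ⟨q, hq⟩ := hI₂o
    omega
  have hDcard : 1 < D.card := by
    have h1' : 0 < D.card := Finset.card_pos.mpr ⟨m', hm'D⟩
    omega
  obtain ⟨m'', hm''D, hm''ne⟩ := Finset.exists_mem_ne hDcard m'
  have hmne'' : m ≠ m'' := fun h => hmD (h ▸ hm''D)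
  have hsub : ({m, m', m''} : Finset (Fin n)) ⊆ univ := Finset.subset_univ _
  have hsum3 : ∑ i ∈ ({m, m', m''} : Finset (Fin n)), g i = g m + g m' + g m'' := by
    rw [Finset.sum_insert (by simp [hmm', hmne'']), Finset.sum_insert (by simp [hm''ne.symm]), Finset.sum_singleton]
    ring
  have hle : ∑ i ∈ ({m, m', m''} : Finset (Fin n)), g i ≤ ∑ i, g i :=
    Finset.sum_le_sum_of_subset_of_nonneg hsub (fun i _ _ => hgnn i)
  have := hgD m' hm'D
  have := hgD m'' hm''D
  rw [hsum3, hgsum] at hle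
  linarith

lemma parity_extreme_subset {n : ℕ} (A0 A1 : Fin n → Prop) :
    Set.extremePoints ℝ (parityP A0 A1) ⊆ parityV A0 A1 := by
  intro e he
  obtain ⟨heP, hext⟩ := he
  obtain ⟨h0, h1, hz, ho, hI⟩ := heP
  have hint : ∀ i, e i = 0 ∨ e i = 1 := by
    by_contra hcon
    push_neg at hcon
    obtain ⟨j, hj0, hj1⟩ := hcon
    by_cases hF2 : ∃ k, (e k ≠ 0 ∧ e k ≠ 1) ∧ k ≠ j
    · -- at least two fractional coordinates
      obtain ⟨k, ⟨hk0, hk1⟩, hkj⟩ := hF2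
      have hjk : j ≠ k := Ne.symm hkj
      have hj0' : 0 < e j := lt_of_le_of_ne (h0 j) (Ne.symm hj0)
      have hj1' : e j < 1 := lt_of_le_of_ne (h1 j) hj1
      have hk0' : 0 < e k := lt_of_le_of_ne (h0 k) (Ne.symm hk0)
      have hk1' : e k < 1 := lt_of_le_of_ne (h1 k) hk1
      have hA1j : A1 j := by by_contra h; exact hj0 (hz j h)
      have hA0j : A0 j := by by_contra h; exact hj1 (ho j h)
      have hA1k : A1 k := by by_contra h; exact hk0 (hz k h)
      have hA0k : A0 k := by by_contra h; exact hk1 (ho k h)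
      obtain ⟨τs, hτs, hkey⟩ :
          ∃ τs : ℝ, (τs = 1 ∨ τs = -1) ∧ ∀ I : Finset (Fin n), Odd I.card → losb e I = 1 →
            ((if j ∈ I then -(1:ℝ) else 1) + (if k ∈ I then -τs else τs)) = 0 := by
        by_cases hsep : ∃ I : Finset (Fin n), Odd I.card ∧ losb e I = 1 ∧ ¬(j ∈ I ↔ k ∈ I)
        · refine ⟨1, Or.inl rfl, ?_⟩
          intro I hIo hIt
          by_cases hiff : j ∈ I ↔ k ∈ I
          · obtain ⟨I₁, hI₁o, hI₁t, hI₁s⟩ := hsep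
            exact (parity_caseC e h0 h1 hjk hj0 hj1 hk0 hk1 hI₁o hIo hI₁t hIt hI₁s hiff).elim
          · by_cases hjI : j ∈ I
            · have hkI : k ∉ I := fun h => hiff (iff_of_true hjI h)
              rw [if_pos hjI, if_neg hkI]; norm_num
            · have hkI : k ∈ I := by tauto
              rw [if_neg hjI, if_pos hkI]; norm_num
        · refine ⟨-1, Or.inr rfl, ?_⟩
          intro I hIo hIt
          have hiff : j ∈ I ↔ k ∈ I := by
            by_contra hc; exact hsep ⟨I, hIo, hIt, hc⟩
          by_cases hjI : j ∈ I
          · rw [if_pos hjI, if_pos (hiff.mp hjI)]; norm_num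
          · rw [if_neg hjI, if_neg (fun h => hjI (hiff.mpr h))]; norm_num
      obtain ⟨ε, hε0, hεQ, hεj1, hεj2, hεk1, hεk2⟩ :
          ∃ ε : ℝ, 0 < ε ∧ (∀ I : Finset (Fin n), Odd I.card → losb e I ≠ 1 →
              2*ε ≤ losb e I - 1)
            ∧ ε ≤ e j ∧ ε ≤ 1 - e j ∧ ε ≤ e k ∧ ε ≤ 1 - e k := by
        set Q : Finset (Finset (Fin n)) :=
          univ.filter (fun I => Odd I.card ∧ losb e I ≠ 1) with hQ_def
        have hQgt : ∀ I ∈ Q, 1 < losb e I := by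
          intro I hIQ
          rw [hQ_def, Finset.mem_filter] at hIQ
          exact lt_of_le_of_ne (hI I hIQ.2.1) (Ne.symm hIQ.2.2)
        by_cases hQ : Q.Nonempty
        · set A := Q.inf' hQ (fun I => (losb e I - 1)/2) with hA_def
          set Bm := min (min (e j) (1 - e j)) (min (e k) (1 - e k)) with hB_def
          have hble : min A Bm ≤ Bm := min_le_right _ _
          refine ⟨min A Bm, ?_, ?_, ?_, ?_, ?_, ?_⟩
          · apply lt_min
            · rw [hA_def, Finset.lt_inf'_iff]
              intro I hIQ
              have := hQgt I hIQ
              linarith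
            · rw [hB_def]
              apply lt_min <;> apply lt_min <;> linarith
          · intro I hIo hIne
            have hIQ : I ∈ Q := by
              rw [hQ_def, Finset.mem_filter]; exact ⟨Finset.mem_univ I, hIo, hIne⟩
            have h' : A ≤ (losb e I - 1)/2 := Finset.inf'_le _ hIQ
            have h'' : min A Bm ≤ A := min_le_left _ _
            linarith
          · exact hble.trans ((min_le_left _ _).trans (min_le_left _ _))
          · exact hble.trans ((min_le_left _ _).trans (min_le_right _ _))
          · exact hble.trans ((min_le_right _ _).trans (min_le_left _ _))
          · exact hble.trans ((min_le_right _ _).trans (min_le_right _ _))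
        · refine ⟨min (min (e j) (1 - e j)) (min (e k) (1 - e k)), ?_, ?_, ?_, ?_, ?_, ?_⟩
          · apply lt_min <;> apply lt_min <;> linarith
          · intro I hIo hIne
            refine absurd ?_ hQ
            refine ⟨I, ?_⟩
            rw [hQ_def, Finset.mem_filter]
            exact ⟨Finset.mem_univ I, hIo, hIne⟩
          · exact (min_le_left _ _).trans (min_le_left _ _)
          · exact (min_le_left _ _).trans (min_le_right _ _)
          · exact (min_le_right _ _).trans (min_le_left _ _)
          · exact (min_le_right _ _).trans (min_le_right _ _)
      set pt : ℝ → Fin n → ℝ :=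
        fun σ i => e i + ((if i = j then σ else 0) + (if i = k then σ * τs else 0)) with hpt_def
      have hptj : ∀ σ, pt σ j = e j + σ := by intro σ; simp [hpt_def, hjk]
      have hptk : ∀ σ, pt σ k = e k + σ * τs := by intro σ; simp [hpt_def, hjk.symm]
      have hpti : ∀ σ i, i ≠ j → i ≠ k → pt σ i = e i := by
        intro σ i hi1 hi2; simp [hpt_def, hi1, hi2]
      have hmemP : ∀ σ : ℝ, (σ = ε ∨ σ = -ε) → pt σ ∈ parityP A0 A1 := by
        intro σ hσ
        have habs : -ε ≤ σ ∧ σ ≤ ε := by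
          rcases hσ with h | h <;> rw [h] <;> constructor <;> linarith
        have habs' : -ε ≤ σ * τs ∧ σ * τs ≤ ε := by
          rcases hσ with h | h <;> rcases hτs with h' | h' <;> rw [h, h'] <;>
            constructor <;> linarith
        refine ⟨?_, ?_, ?_, ?_, ?_⟩
        · intro i
          by_cases hij : i = j
          · subst hij; rw [hptj]; linarith [habs.1]
          · by_cases hik : i = k
            · subst hik; rw [hptk]; linarith [habs'.1]
            · rw [hpti σ i hij hik]; exact h0 i
        · intro i
          by_cases hij : i = j
          · subst hij; rw [hptj]; linarith [habs.2]
          · by_cases hik : i = k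
            · subst hik; rw [hptk]; linarith [habs'.2]
            · rw [hpti σ i hij hik]; exact h1 i
        · intro i hA
          by_cases hij : i = j
          · subst hij; exact absurd hA1j hA
          · by_cases hik : i = k
            · subst hik; exact absurd hA1k hA
            · rw [hpti σ i hij hik]; exact hz i hA
        · intro i hA
          by_cases hij : i = j
          · subst hij; exact absurd hA0j hA
          · by_cases hik : i = k
            · subst hik; exact absurd hA0k hA
            · rw [hpti σ i hij hik]; exact ho i hA
        · intro I hIo
          have hδ : losb (pt σ) I = losb e I +
              ((if j ∈ I then -σ else σ) + (if k ∈ I then -(σ*τs) else σ*τs)) := by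
            rw [hpt_def, losb_add, sum_two_point hjk, sum_two_point hjk]
            by_cases hjI : j ∈ I <;> by_cases hkI : k ∈ I <;>
              simp [hjI, hkI, Finset.mem_compl] <;> ring
          by_cases ht : losb e I = 1
          · have h00 := hkey I hIo ht
            have hfac : ((if j ∈ I then -σ else σ) + (if k ∈ I then -(σ*τs) else σ*τs))
                = σ * ((if j ∈ I then -(1:ℝ) else 1) + (if k ∈ I then -τs else τs)) := by
              by_cases hjI : j ∈ I <;> by_cases hkI : k ∈ I <;> simp [hjI, hkI] <;> ring
            rw [hδ, hfac, h00, mul_zero, add_zero, ht]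
          · have h2e := hεQ I hIo ht
            have hb1 : -ε ≤ (if j ∈ I then -σ else σ) := by
              split_ifs <;> linarith [habs.1, habs.2]
            have hb2 : -ε ≤ (if k ∈ I then -(σ*τs) else σ*τs) := by
              split_ifs <;> linarith [habs'.1, habs'.2]
            have hge := hI I hIo
            rw [hδ]; linarith
      have hxP := hmemP ε (Or.inl rfl)
      have hyP := hmemP (-ε) (Or.inr rfl)
      have hseg : e ∈ openSegment ℝ (pt ε) (pt (-ε)) := by
        refine ⟨1/2, 1/2, by norm_num, by norm_num, by norm_num, ?_⟩
        funext i
        simp only [Pi.add_apply, Pi.smul_apply, smul_eq_mul]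
        by_cases hij : i = j
        · subst hij; rw [hptj, hptj]; ring
        · by_cases hik : i = k
          · subst hik; rw [hptk, hptk]; ring
          · rw [hpti _ _ hij hik, hpti _ _ hij hik]; ring
      have hxe := hext hxP hyP hseg
      have hcf := congrFun hxe j
      rw [hptj] at hcf
      linarith
    · -- only one fractional coordinate: contradiction
      push_neg at hF2
      have honly : ∀ i, i ≠ j → e i = 0 ∨ e i = 1 := by
        intro i hij
        by_contra hc; push_neg at hc
        exact hij (hF2 i hc)
      set S : Finset (Fin n) := univ.filter (fun i => e i = 1) with hS_def
      have hjS : j ∉ S := by simp [hS_def, hj1]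
      have hS1 : ∀ i ∈ S, e i = 1 := fun i hi => (Finset.mem_filter.mp hi).2
      have hS0 : ∀ i, i ∉ S → i ≠ j → e i = 0 := by
        intro i hiS hij
        rcases honly i hij with h | h
        · exact h
        · exact absurd (by simp [hS_def, h] : i ∈ S) hiS
      by_cases hpar : Odd S.card
      · have hle := hI S hpar
        have e1 : ∑ i ∈ S, (1 - e i) = 0 :=
          Finset.sum_eq_zero fun i hi => by rw [hS1 i hi]; ring
        have e2 : ∑ i ∈ Sᶜ, e i = e j := by
          apply Finset.sum_eq_single_of_mem j (Finset.mem_compl.mpr hjS)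
          intro i hi hij
          exact hS0 i (Finset.mem_compl.mp hi) hij
        rw [losb, e1, e2, zero_add] at hle
        exact hj1 (le_antisymm (h1 j) hle)
      · have hodd : Odd (insert j S).card := by
          rw [Finset.card_insert_of_notMem hjS]
          exact (Nat.not_odd_iff_even.mp hpar).add_one
        have hle := hI _ hodd
        have e1 : ∑ i ∈ insert j S, (1 - e i) = 1 - e j := by
          rw [Finset.sum_insert hjS,
            Finset.sum_eq_zero (fun i hi => by rw [hS1 i hi]; ring : ∀ i ∈ S, 1 - e i = 0),
            add_zero]
        have e2 : ∑ i ∈ (insert j S)ᶜ, e i = 0 := by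
          apply Finset.sum_eq_zero
          intro i hi
          rw [Finset.mem_compl, Finset.mem_insert] at hi
          push_neg at hi
          exact hS0 i hi.2 hi.1
        rw [losb, e1, e2, add_zero] at hle
        have : 0 < e j := lt_of_le_of_ne (h0 j) (Ne.symm hj0)
        linarith
  -- now e is integral; produce S
  set S : Finset (Fin n) := univ.filter (fun i => e i = 1) with hS_def
  have hS1 : ∀ i ∈ S, e i = 1 := fun i hi => (Finset.mem_filter.mp hi).2
  have hS0 : ∀ i, i ∉ S → e i = 0 := by
    intro i hiS
    rcases hint i with h | h
    · exact h
    · exact absurd (by simp [hS_def, h] : i ∈ S) hiS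
  refine ⟨S, ?_, ?_, ?_, ?_⟩
  · rw [← Nat.not_odd_iff_even]
    intro hodd
    have hle := hI S hodd
    have e1 : ∑ i ∈ S, (1 - e i) = 0 :=
      Finset.sum_eq_zero fun i hi => by rw [hS1 i hi]; ring
    have e2 : ∑ i ∈ Sᶜ, e i = 0 :=
      Finset.sum_eq_zero fun i hi => hS0 i (Finset.mem_compl.mp hi)
    rw [losb, e1, e2] at hle
    linarith
  · intro i hi
    by_contra h
    have h' := hS1 i hi
    rw [hz i h] at h'
    norm_num at h'
  · intro i hi
    by_contra h
    have h' := hS0 i hi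
    rw [ho i h] at h'
    norm_num at h'
  · funext i
    by_cases hi : i ∈ S
    · rw [if_pos hi]; exact hS1 i hi
    · rw [if_neg hi]; exact hS0 i hi

lemma parityP_convex {n : ℕ} (A0 A1 : Fin n → Prop) : Convex ℝ (parityP A0 A1) := by
  intro x hx y hy a b ha hb hab
  obtain ⟨hx0, hx1, hxz, hxo, hxI⟩ := hx
  obtain ⟨hy0, hy1, hyz, hyo, hyI⟩ := hy
  have ha' : a = 1 - b := by linarith
  subst ha'
  refine ⟨?_, ?_, ?_, ?_, ?_⟩
  · intro i
    simp only [Pi.add_apply, Pi.smul_apply, smul_eq_mul]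
    exact add_nonneg (mul_nonneg ha (hx0 i)) (mul_nonneg hb (hy0 i))
  · intro i
    simp only [Pi.add_apply, Pi.smul_apply, smul_eq_mul]
    nlinarith [hx1 i, hy1 i, hx0 i, hy0 i]
  · intro i h
    simp only [Pi.add_apply, Pi.smul_apply, smul_eq_mul, hxz i h, hyz i h]
    ring
  · intro i h
    simp only [Pi.add_apply, Pi.smul_apply, smul_eq_mul, hxo i h, hyo i h]
    ring
  · intro I hIo
    have hx' := hxI I hIo
    have hy' := hyI I hIo
    have hfun : ((1-b) • x + b • y) = fun i => (1-b) * x i + b * y i := by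
      funext i; simp [Pi.add_apply, Pi.smul_apply, smul_eq_mul]
    rw [hfun]
    have heq : losb (fun i => (1-b) * x i + b * y i) I
        = (1-b) * losb x I + b * losb y I := by
      rw [losb_eq_sum_univ, losb_eq_sum_univ, losb_eq_sum_univ, Finset.mul_sum,
        Finset.mul_sum, ← Finset.sum_add_distrib]
      apply Finset.sum_congr rfl
      intro i _
      split_ifs <;> ring
    rw [heq]
    nlinarith [mul_le_mul_of_nonneg_left hx' ha, mul_le_mul_of_nonneg_left hy' hb]

lemma parityP_closed {n : ℕ} (A0 A1 : Fin n → Prop) : IsClosed (parityP A0 A1) := by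
  have hcont : ∀ i : Fin n, Continuous fun b : Fin n → ℝ => b i := fun i => continuous_apply i
  have hrepr : parityP A0 A1 =
      (⋂ i, {b : Fin n → ℝ | 0 ≤ b i}) ∩ ((⋂ i, {b : Fin n → ℝ | b i ≤ 1}) ∩
      ((⋂ i, {b : Fin n → ℝ | ¬ A1 i → b i = 0}) ∩
      ((⋂ i, {b : Fin n → ℝ | ¬ A0 i → b i = 1}) ∩
      (⋂ I : Finset (Fin n), ⋂ (_ : Odd I.card), {b : Fin n → ℝ | 1 ≤ losb b I})))) := by
    ext b
    simp only [Set.mem_inter_iff, Set.mem_iInter, Set.mem_setOf_eq, parityP]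
  rw [hrepr]
  refine IsClosed.inter (isClosed_iInter fun i => isClosed_le continuous_const (hcont i))
    (IsClosed.inter (isClosed_iInter fun i => isClosed_le (hcont i) continuous_const)
    (IsClosed.inter ?_ (IsClosed.inter ?_ ?_)))
  · refine isClosed_iInter fun i => ?_
    rcases Classical.em (A1 i) with h | h
    · have : {b : Fin n → ℝ | ¬ A1 i → b i = 0} = Set.univ := by ext b; simp [h]
      rw [this]; exact isClosed_univ
    · have : {b : Fin n → ℝ | ¬ A1 i → b i = 0} = {b : Fin n → ℝ | b i = 0} := by
        ext b; simp [h]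
      rw [this]; exact isClosed_eq (hcont i) continuous_const
  · refine isClosed_iInter fun i => ?_
    rcases Classical.em (A0 i) with h | h
    · have : {b : Fin n → ℝ | ¬ A0 i → b i = 1} = Set.univ := by ext b; simp [h]
      rw [this]; exact isClosed_univ
    · have : {b : Fin n → ℝ | ¬ A0 i → b i = 1} = {b : Fin n → ℝ | b i = 1} := by
        ext b; simp [h]
      rw [this]; exact isClosed_eq (hcont i) continuous_const
  · refine isClosed_iInter fun I => isClosed_iInter fun _ => ?_
    have : Continuous fun b : Fin n → ℝ => losb b I := by
      unfold losb
      exact (continuous_finset_sum _ fun i _ => continuous_const.sub (hcont i)).add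
        (continuous_finset_sum _ fun i _ => hcont i)
    exact isClosed_le continuous_const this

lemma parityP_subset_hull {n : ℕ} (A0 A1 : Fin n → Prop) :
    parityP A0 A1 ⊆ convexHull ℝ (parityV A0 A1) := by
  have hVfin : (parityV A0 A1).Finite := by
    apply Set.Finite.subset (Set.finite_range fun S : Finset (Fin n) =>
      (fun i => if i ∈ S then (1:ℝ) else 0))
    rintro c ⟨S, -, -, -, rfl⟩
    exact ⟨S, rfl⟩
  have hsub : parityP A0 A1 ⊆ Set.Icc (0 : Fin n → ℝ) 1 := by
    rintro b ⟨h0, h1, -, -, -⟩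
    exact ⟨fun i => h0 i, fun i => h1 i⟩
  have hcomp : IsCompact (parityP A0 A1) :=
    isCompact_Icc.of_isClosed_subset (parityP_closed A0 A1) hsub
  calc parityP A0 A1
      = closure (convexHull ℝ (Set.extremePoints ℝ (parityP A0 A1))) :=
        (closure_convexHull_extremePoints hcomp (parityP_convex A0 A1)).symm
    _ ⊆ closure (convexHull ℝ (parityV A0 A1)) :=
        closure_mono (convexHull_mono (parity_extreme_subset A0 A1))
    _ = convexHull ℝ (parityV A0 A1) := (hVfin.isClosed_convexHull (𝕜 := ℝ)).closure_eq

end AuxLOS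

section AuxGlue
open Finset

lemma zmod2_cases (a : ZMod 2) : a = 0 ∨ a = 1 := by
  have h : ∀ b : ZMod 2, b = 0 ∨ b = 1 := by decide
  exact h a

lemma F2_add_self {d : ℕ} (w : F2 d) : w + w = 0 := by
  funext i
  have h : ∀ a : ZMod 2, a + a = 0 := by decide
  exact h (w i)

lemma TP_sum_filter {d n : ℕ} {B : Fin n → Set (F2 d)} {x : Fin n → F2 d → ℝ}
    (hx : x ∈ TP B) (i : Fin n) :
    ∑ ω ∈ Finset.univ.filter (fun ω : F2 d => ω ∈ B i), x i ω = 1 := by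
  obtain ⟨-, hzero, hsum⟩ := hx
  have hsplit := Finset.sum_filter_add_sum_filter_not Finset.univ
    (fun ω : F2 d => ω ∈ B i) (x i)
  have h2 : ∑ ω ∈ Finset.univ.filter (fun ω : F2 d => ¬ ω ∈ B i), x i ω = 0 :=
    Finset.sum_eq_zero fun ω hω => hzero i ω (Finset.mem_filter.mp hω).2
  rw [h2, add_zero, hsum i] at hsplit
  exact hsplit

lemma indMap_mem_CTP_s18 {d d' n : ℕ} (B : Fin n → Set (F2 d)) (hB : ∀ i, (B i).Nonempty)
    (φ : F2 d →ₗ[ZMod 2] F2 d')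
    (hrank : Module.finrank (ZMod 2) (LinearMap.range φ) ≤ 1)
    {x : Fin n → F2 d → ℝ} (hTP : x ∈ TP B)
    (hLOS : ∀ η : F2 d, η ≠ 0 → ∀ I : Finset (Fin n), Odd I.card → 1 ≤ losLHS B η I x) :
    indMap B φ x ∈ CTP (fun i => φ '' B i) := by
  have hx0 : ∀ i ω, 0 ≤ x i ω := hTP.1
  by_cases hφ0 : ∀ ω, φ ω = 0
  · -- φ is the zero map
    have heq : indMap B φ x = incVec (fun _ : Fin n => (0 : F2 d')) := by
      funext i ω'
      unfold indMap incVec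
      by_cases h : (0 : F2 d') = ω'
      · rw [if_pos h]
        have hfil : Finset.univ.filter (fun ω : F2 d => ω ∈ B i ∧ φ ω = ω')
            = Finset.univ.filter (fun ω : F2 d => ω ∈ B i) := by
          ext ω
          simp [hφ0 ω, ← h]
        rw [hfil]
        exact TP_sum_filter hTP i
      · rw [if_neg h]
        have hfil : Finset.univ.filter (fun ω : F2 d => ω ∈ B i ∧ φ ω = ω') = ∅ := by
          ext ω
          simp only [Finset.mem_filter, Finset.mem_univ, true_and, Finset.notMem_empty,
            iff_false]
          rintro ⟨-, hωv⟩
          exact h (by rw [← hωv, hφ0 ω])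
        rw [hfil, Finset.sum_empty]
    rw [heq]
    apply subset_convexHull
    refine ⟨fun _ => 0, ⟨fun i => ?_, by simp⟩, rfl⟩
    obtain ⟨ω, hω⟩ := hB i
    exact ⟨ω, hω, hφ0 ω⟩
  · -- φ has rank exactly one
    push_neg at hφ0
    obtain ⟨ω₀, hω₀⟩ := hφ0
    set v := φ ω₀ with hv_def
    have hvne : v ≠ 0 := hω₀
    have hval : ∀ ω, φ ω = 0 ∨ φ ω = v := by
      intro ω
      by_cases h : φ ω = 0
      · exact Or.inl h
      · right
        have hsp : Submodule.span (ZMod 2) {v} = LinearMap.range φ := by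
          apply Submodule.eq_of_le_of_finrank_le
          · rw [Submodule.span_le, Set.singleton_subset_iff]
            exact ⟨ω₀, rfl⟩
          · rw [finrank_span_singleton hvne]
            exact hrank
        have hmem : φ ω ∈ Submodule.span (ZMod 2) {v} := by
          rw [hsp]
          exact LinearMap.mem_range_self φ ω
        rw [Submodule.mem_span_singleton] at hmem
        obtain ⟨c, hc⟩ := hmem
        rcases zmod2_cases c with h0 | h1
        · rw [h0, zero_smul] at hc
          exact absurd hc.symm h
        · rw [h1, one_smul] at hc
          exact hc.symm
    obtain ⟨j₀, hj₀⟩ : ∃ j₀, v j₀ ≠ 0 := by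
      by_contra hcon
      push_neg at hcon
      exact hvne (funext fun j => hcon j)
    have hvj₀ : v j₀ = 1 := (zmod2_cases (v j₀)).resolve_left hj₀
    set η : F2 d := fun j => φ (fun j' => if j = j' then 1 else 0) j₀ with hη_def
    have hkeyη : ∀ ω : F2 d, (∑ j, η j * ω j) = φ ω j₀ := by
      intro ω
      conv_rhs => rw [pi_eq_sum_univ ω]
      rw [map_sum, Finset.sum_apply]
      apply Finset.sum_congr rfl
      intro j _
      rw [map_smul]
      simp only [Pi.smul_apply, smul_eq_mul, hη_def]
      ring
    have hη : η ≠ 0 := by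
      intro h
      have h1 : (∑ j, η j * ω₀ j) = 1 := by rw [hkeyη, ← hv_def, hvj₀]
      rw [h] at h1
      simp only [Pi.zero_apply, zero_mul, Finset.sum_const_zero] at h1
      exact zero_ne_one h1
    -- the coordinates
    set b : Fin n → ℝ := fun i => indMap B φ x i v with hb_def
    have hsplit : ∀ i, indMap B φ x i 0 + b i = 1 := by
      intro i
      have h1 : Finset.univ.filter (fun ω : F2 d => ω ∈ B i ∧ φ ω = 0)
          = (Finset.univ.filter (fun ω : F2 d => ω ∈ B i)).filter (fun ω => φ ω = 0) := by
        rw [Finset.filter_filter]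
      have h2 : Finset.univ.filter (fun ω : F2 d => ω ∈ B i ∧ φ ω = v)
          = (Finset.univ.filter (fun ω : F2 d => ω ∈ B i)).filter (fun ω => ¬ φ ω = 0) := by
        rw [Finset.filter_filter]
        ext ω
        simp only [Finset.mem_filter, Finset.mem_univ, true_and]
        constructor
        · rintro ⟨hb', hv'⟩
          exact ⟨hb', by rw [hv']; exact hvne⟩
        · rintro ⟨hb', h0⟩
          exact ⟨hb', (hval ω).resolve_left h0⟩
      show (∑ ω ∈ Finset.univ.filter (fun ω : F2 d => ω ∈ B i ∧ φ ω = 0), x i ω)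
          + (∑ ω ∈ Finset.univ.filter (fun ω : F2 d => ω ∈ B i ∧ φ ω = v), x i ω) = 1
      rw [h1, h2, Finset.sum_filter_add_sum_filter_not]
      exact TP_sum_filter hTP i
    have hb0 : ∀ i, 0 ≤ b i := fun i => Finset.sum_nonneg fun ω _ => hx0 i ω
    have hi0nn : ∀ i, 0 ≤ indMap B φ x i 0 :=
      fun i => Finset.sum_nonneg fun ω _ => hx0 i ω
    have hb1 : ∀ i, b i ≤ 1 := by
      intro i
      have := hsplit i
      have := hi0nn i
      linarith
    have hout : ∀ i (ω' : F2 d'), ω' ≠ 0 → ω' ≠ v → indMap B φ x i ω' = 0 := by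
      intro i ω' h0 hv'
      apply Finset.sum_eq_zero
      intro ω hω
      rw [Finset.mem_filter] at hω
      rcases hval ω with h | h
      · exact absurd (hω.2.2.symm.trans h) h0
      · exact absurd (hω.2.2.symm.trans h) hv'
    have hbz : ∀ i, ¬ (v ∈ φ '' B i) → b i = 0 := by
      intro i h
      apply Finset.sum_eq_zero
      intro ω hω
      rw [Finset.mem_filter] at hω
      exact absurd ⟨ω, hω.2.1, hω.2.2⟩ h
    have hbo : ∀ i, ¬ ((0 : F2 d') ∈ φ '' B i) → b i = 1 := by
      intro i h
      have hz0 : indMap B φ x i 0 = 0 := by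
        apply Finset.sum_eq_zero
        intro ω hω
        rw [Finset.mem_filter] at hω
        exact absurd ⟨ω, hω.2.1, hω.2.2⟩ h
      have := hsplit i
      linarith
    have hiff0 : ∀ ω : F2 d, ((∑ j, η j * ω j) = 0 ↔ φ ω = 0) := by
      intro ω
      rw [hkeyη ω]
      constructor
      · intro h
        rcases hval ω with h' | h'
        · exact h'
        · rw [h', hvj₀] at h
          exact absurd h one_ne_zero
      · intro h
        rw [h]
        rfl
    have hiff1 : ∀ ω : F2 d, ((∑ j, η j * ω j) = 1 ↔ φ ω = v) := by
      intro ω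
      rw [hkeyη ω]
      constructor
      · intro h
        rcases hval ω with h' | h'
        · rw [h'] at h
          exact absurd h.symm one_ne_zero
        · exact h'
      · intro h
        rw [h, hvj₀]
    have hlos : ∀ I : Finset (Fin n), losLHS B η I x = losb b I := by
      intro I
      unfold losLHS losb
      congr 1
      · apply Finset.sum_congr rfl
        intro i _
        have hfeq : Finset.univ.filter (fun ω : F2 d => ω ∈ B i ∧ (∑ j, η j * ω j) = 0)
            = Finset.univ.filter (fun ω : F2 d => ω ∈ B i ∧ φ ω = 0) := by
          ext ω
          simp only [Finset.mem_filter, Finset.mem_univ, true_and]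
          exact and_congr_right fun _ => hiff0 ω
        rw [hfeq]
        have := hsplit i
        show indMap B φ x i 0 = 1 - b i
        linarith
      · apply Finset.sum_congr rfl
        intro i _
        have hfeq : Finset.univ.filter (fun ω : F2 d => ω ∈ B i ∧ (∑ j, η j * ω j) = 1)
            = Finset.univ.filter (fun ω : F2 d => ω ∈ B i ∧ φ ω = v) := by
          ext ω
          simp only [Finset.mem_filter, Finset.mem_univ, true_and]
          exact and_congr_right fun _ => hiff1 ω
        rw [hfeq]
        rfl
    have hbP : b ∈ parityP (fun i => (0 : F2 d') ∈ φ '' B i) (fun i => v ∈ φ '' B i) := by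
      refine ⟨hb0, hb1, hbz, hbo, ?_⟩
      intro I hIo
      rw [← hlos I]
      exact hLOS η hη I hIo
    have hbhull := parityP_subset_hull _ _ hbP
    -- the affine map
    set fL : (Fin n → ℝ) →ₗ[ℝ] (Fin n → F2 d' → ℝ) :=
      { toFun := fun c i ω' => if ω' = v then c i else if ω' = 0 then - c i else 0
        map_add' := by
          intro c c'
          funext i ω'
          simp only [Pi.add_apply]
          split_ifs <;> ring
        map_smul' := by
          intro r c
          funext i ω'
          simp only [Pi.smul_apply, smul_eq_mul, RingHom.id_apply]
          split_ifs <;> ring } with hfL_def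
    set f : (Fin n → ℝ) →ᵃ[ℝ] (Fin n → F2 d' → ℝ) :=
      { toFun := fun c i ω' => if ω' = v then c i else if ω' = 0 then 1 - c i else 0
        linear := fL
        map_vadd' := by
          intro p w
          funext i ω'
          simp only [vadd_eq_add, Pi.add_apply, hfL_def, LinearMap.coe_mk, AddHom.coe_mk]
          split_ifs <;> ring } with hf_def
    have hfapp : ∀ (c : Fin n → ℝ) i ω',
        f c i ω' = if ω' = v then c i else if ω' = 0 then 1 - c i else 0 := fun _ _ _ => rfl
    have hfb : indMap B φ x = f b := by
      funext i ω'
      rw [hfapp]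
      by_cases h1 : ω' = v
      · rw [if_pos h1, h1]
      · rw [if_neg h1]
        by_cases h2 : ω' = 0
        · rw [if_pos h2, h2]
          have := hsplit i
          linarith
        · rw [if_neg h2]
          exact hout i ω' h2 h1
    have himg : f '' parityV (fun i => (0 : F2 d') ∈ φ '' B i) (fun i => v ∈ φ '' B i)
        ⊆ incVec '' { ξ | IsCyclicTransversal (fun i => φ '' B i) ξ } := by
      rintro _ ⟨c, ⟨S, hSeven, hS1, hS0, rfl⟩, rfl⟩
      refine ⟨fun i => if i ∈ S then v else 0, ⟨fun i => ?_, ?_⟩, ?_⟩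
      · show (if i ∈ S then v else 0) ∈ φ '' B i
        by_cases hi : i ∈ S
        · rw [if_pos hi]; exact hS1 i hi
        · rw [if_neg hi]; exact hS0 i hi
      · have hsum : (∑ i, (if i ∈ S then v else 0)) = S.card • v := by
          rw [Finset.sum_ite_mem, Finset.univ_inter, Finset.sum_const]
        rw [hsum]
        obtain ⟨m, hm⟩ := hSeven
        rw [hm, add_nsmul]
        exact F2_add_self _
      · funext i ω'
        show (if (if i ∈ S then v else 0) = ω' then (1:ℝ) else 0)
            = if ω' = v then (if i ∈ S then (1:ℝ) else 0)
              else if ω' = 0 then 1 - (if i ∈ S then (1:ℝ) else 0) else 0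
        by_cases hi : i ∈ S
        · simp only [if_pos hi]
          by_cases h1 : ω' = v
          · subst h1; simp
          · rw [if_neg (fun h : v = ω' => h1 h.symm), if_neg h1]
            by_cases h2 : ω' = 0
            · subst h2; norm_num
            · rw [if_neg h2]
        · simp only [if_neg hi]
          by_cases h1 : ω' = v
          · subst h1
            rw [if_neg (fun h : (0 : F2 d') = v => hvne h.symm), if_pos rfl]
          · rw [if_neg h1]
            by_cases h2 : ω' = 0
            · subst h2
              rw [if_pos rfl, if_pos rfl]
              norm_num
            · rw [if_neg (fun h : (0 : F2 d') = ω' => h2 h.symm), if_neg h2]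
    have hmem : f b ∈ convexHull ℝ
        (f '' parityV (fun i => (0 : F2 d') ∈ φ '' B i) (fun i => v ∈ φ '' B i)) := by
      rw [← AffineMap.image_convexHull]
      exact Set.mem_image_of_mem f hbhull
    rw [hfb]
    exact convexHull_mono himg hmem

end AuxGlue

/-- the rank-1 relaxation is cut out of the transversal polytope by the LOS
inequalities. -/
theorem statement18 (d n : ℕ) (hn : 2 ≤ n) (B : Fin n → Set (F2 d))
    (hB : ∀ i, (B i).Nonempty) :
    RPr B 1 = { x ∈ TP B | ∀ (η : F2 d), η ≠ 0 → ∀ I : Finset (Fin n), Odd I.card →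
      1 ≤ losLHS B η I x } := by
  apply Set.Subset.antisymm
  · intro x hx
    simp only [RPr, Set.mem_iInter] at hx
    have hTP : x ∈ TP B := by
      have hr : Module.finrank (ZMod 2)
          (LinearMap.range (0 : F2 d →ₗ[ZMod 2] F2 0)) ≤ 1 := by
        rw [LinearMap.range_zero]
        simp
      exact (hx 0 0 hr).1
    refine ⟨hTP, ?_⟩
    intro η hη I hIo
    set φη : F2 d →ₗ[ZMod 2] F2 1 :=
      { toFun := fun ω => fun _ => ∑ j, η j * ω j
        map_add' := by
          intro ω ω'
          funext s
          simp only [Pi.add_apply]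
          rw [← Finset.sum_add_distrib]
          apply Finset.sum_congr rfl
          intros; ring
        map_smul' := by
          intro c ω
          funext s
          simp only [Pi.smul_apply, smul_eq_mul, RingHom.id_apply]
          rw [Finset.mul_sum]
          apply Finset.sum_congr rfl
          intros; ring } with hφη_def
    have hφapp : ∀ ω : F2 d, φη ω = fun _ => ∑ j, η j * ω j := fun _ => rfl
    have hr : Module.finrank (ZMod 2) (LinearMap.range φη) ≤ 1 := by
      have h1 := Submodule.finrank_le (LinearMap.range φη)
      have h2 : Module.finrank (ZMod 2) (F2 1) = 1 := by
        rw [Module.finrank_fintype_fun_eq_card, Fintype.card_fin]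
      omega
    have hy := (hx 1 φη hr).2
    set Lf : (Fin n → F2 1 → ℝ) → ℝ :=
      fun y => (∑ i ∈ I, y i 0) + ∑ i ∈ Iᶜ, y i (fun _ => 1) with hLf_def
    have hLlin : IsLinearMap ℝ Lf := by
      constructor
      · intro y z
        simp only [hLf_def, Pi.add_apply]
        rw [Finset.sum_add_distrib, Finset.sum_add_distrib]
        ring
      · intro r y
        simp only [hLf_def, Pi.smul_apply, smul_eq_mul]
        rw [← Finset.mul_sum, ← Finset.mul_sum]
        ring
    have hhalf : Convex ℝ {y : Fin n → F2 1 → ℝ | 1 ≤ Lf y} := convex_halfSpace_ge hLlin 1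
    have hsubhalf : CTP (fun i => φη '' B i) ⊆ {y : Fin n → F2 1 → ℝ | 1 ≤ Lf y} := by
      apply convexHull_min ?_ hhalf
      rintro _ ⟨ζ, ⟨hζmem, hζsum⟩, rfl⟩
      show 1 ≤ Lf (incVec ζ)
      by_cases hex : (∃ i ∈ I, ζ i = 0) ∨ (∃ i ∈ Iᶜ, ζ i = fun _ => (1 : ZMod 2))
      · have hnn1 : ∀ i ∈ I, (0:ℝ) ≤ incVec ζ i 0 := by
          intro i _; unfold incVec; split_ifs <;> norm_num
        have hnn2 : ∀ i ∈ Iᶜ, (0:ℝ) ≤ incVec ζ i (fun _ => 1) := by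
          intro i _; unfold incVec; split_ifs <;> norm_num
        rcases hex with ⟨i₀, hi₀I, hi₀⟩ | ⟨i₀, hi₀I, hi₀⟩
        · have h1 : (1:ℝ) ≤ ∑ i ∈ I, incVec ζ i 0 := by
            have hs := Finset.single_le_sum hnn1 hi₀I
            unfold incVec at hs
            rw [if_pos hi₀] at hs
            exact hs
          have h2 : (0:ℝ) ≤ ∑ i ∈ Iᶜ, incVec ζ i (fun _ => 1) := Finset.sum_nonneg hnn2
          simp only [hLf_def]
          linarith
        · have h1 : (1:ℝ) ≤ ∑ i ∈ Iᶜ, incVec ζ i (fun _ => 1) := by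
            have hs := Finset.single_le_sum hnn2 hi₀I
            unfold incVec at hs
            rw [if_pos hi₀] at hs
            exact hs
          have h2 : (0:ℝ) ≤ ∑ i ∈ I, incVec ζ i 0 := Finset.sum_nonneg hnn1
          simp only [hLf_def]
          linarith
      · push_neg at hex
        obtain ⟨hall1, hall2⟩ := hex
        exfalso
        have hζcases : ∀ w : F2 1, w = 0 ∨ w = fun _ => (1 : ZMod 2) := by
          intro w
          rcases zmod2_cases (w 0) with h | h
          · left; funext s; rw [Subsingleton.elim s 0]; exact h
          · right; funext s; rw [Subsingleton.elim s 0]; exact h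
        have hf1 : Finset.univ.filter (fun i : Fin n => i ∈ I) = I := by ext; simp
        have hf2 : Finset.univ.filter (fun i : Fin n => ¬ i ∈ I) = Iᶜ := by ext; simp
        have hs1 : ∑ i ∈ I, ζ i 0 = (I.card : ZMod 2) := by
          rw [Finset.sum_congr rfl (fun i hi => ?_), Finset.sum_const, nsmul_eq_mul, mul_one]
          rcases hζcases (ζ i) with h | h
          · exact absurd h (hall1 i hi)
          · rw [h]
        have hs2 : ∑ i ∈ Iᶜ, ζ i 0 = 0 := by
          apply Finset.sum_eq_zero
          intro i hi
          rcases hζcases (ζ i) with h | h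
          · rw [h]; rfl
          · exact absurd h (hall2 i hi)
        have hsum0 : (∑ i, ζ i 0) = 0 := by
          rw [← Finset.sum_apply 0 Finset.univ ζ, hζsum]
          rfl
        rw [← Finset.sum_filter_add_sum_filter_not Finset.univ (fun i => i ∈ I)
          (fun i => ζ i 0), hf1, hf2, hs1, hs2, add_zero] at hsum0
        have hcast1 : (I.card : ZMod 2) = 1 := by
          obtain ⟨m, hm⟩ := hIo
          rw [hm]
          push_cast
          rw [show ((2:ZMod 2)) = 0 by decide]
          ring
        rw [hcast1] at hsum0
        exact one_ne_zero hsum0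
    have hc0 : ∀ ω : F2 d, (φη ω = 0 ↔ (∑ j, η j * ω j) = 0) := by
      intro ω
      rw [hφapp]
      exact ⟨fun h => congrFun h 0, fun h => funext fun s => h⟩
    have hc1 : ∀ ω : F2 d, (φη ω = (fun _ => (1:ZMod 2)) ↔ (∑ j, η j * ω j) = 1) := by
      intro ω
      rw [hφapp]
      exact ⟨fun h => congrFun h 0, fun h => funext fun s => h⟩
    have hL : losLHS B η I x = Lf (indMap B φη x) := by
      unfold losLHS
      simp only [hLf_def]
      congr 1
      · apply Finset.sum_congr rfl
        intro i _
        show _ = indMap B φη x i 0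
        unfold indMap
        apply Finset.sum_congr ?_ (fun _ _ => rfl)
        ext ω
        simp only [Finset.mem_filter, Finset.mem_univ, true_and]
        exact and_congr_right fun _ => (hc0 ω).symm
      · apply Finset.sum_congr rfl
        intro i _
        show _ = indMap B φη x i (fun _ => (1:ZMod 2))
        unfold indMap
        apply Finset.sum_congr ?_ (fun _ _ => rfl)
        ext ω
        simp only [Finset.mem_filter, Finset.mem_univ, true_and]
        exact and_congr_right fun _ => (hc1 ω).symm
    rw [hL]
    exact hsubhalf hy
  · rintro x ⟨hTP, hLOS⟩
    simp only [RPr, Set.mem_iInter]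
    intro d' φ hrank
    exact ⟨hTP, indMap_mem_CTP_s18 B hB φ hrank hTP hLOS⟩
end
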